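/- arXiv:math/0508234 — 3 statements merged into one kernel-verified Lean document; each statement's English description precedes it below -/
import Mathlib

section
/- Let Δ be a reduced root system in a Euclidean space with a W-invariant multiplicity function m taking even nonnegative integer values, and let ρ = (1/2) Σ_{α∈Δ⁺} m_α α. Then for every positive root α ∈ Δ⁺, one has ⟨ρ,α⟩/⟨α,α⟩ ≥ m_α/2. -/
/-- For a reduced root system `Δ` with positive system `Δpos`,
Weyl-invariant even multiplicity function `m`, and `ρ = (1/2) Σ_{α∈Δ⁺} m_α α`,
one has `⟨ρ,α⟩/⟨α,α⟩ ≥ m_α/2` for every positive root `α`. -/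
theorem rho_alpha_ge_half_mult
    {E : Type*} [NormedAddCommGroup E] [InnerProductSpace ℝ E]
    (Δ Δpos : Finset E) (m : E → ℕ)
    (hzero : (0:E) ∉ Δ)
    (hrefl : ∀ α ∈ Δ, ∀ β ∈ Δ,
      β - (2 * ((inner ℝ α β : ℝ) / (inner ℝ α α : ℝ))) • α ∈ Δ)
    (hint : ∀ α ∈ Δ, ∀ β ∈ Δ, ∃ z : ℤ,
      2 * ((inner ℝ α β : ℝ) / (inner ℝ α α : ℝ)) = z)
    (hreduced : ∀ α ∈ Δ, (2:ℝ) • α ∉ Δ)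
    (hpos : Δpos ⊆ Δ)
    (hsplit : ∀ α ∈ Δ, α ∈ Δpos ∨ -α ∈ Δpos)
    (hdisj : ∀ α ∈ Δpos, -α ∉ Δpos)
    (hposfun : ∃ f : E →ₗ[ℝ] ℝ, ∀ α ∈ Δpos, 0 < f α)
    (heven : ∀ α, Even (m α))
    (hWinv : ∀ α ∈ Δ, ∀ β ∈ Δ,
      m (β - (2 * ((inner ℝ α β : ℝ) / (inner ℝ α α : ℝ))) • α) = m β)
    (ρ : E) (hρ : ρ = (1/2 : ℝ) • ∑ α ∈ Δpos, (m α : ℝ) • α) :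
    ∀ α ∈ Δpos, (m α : ℝ) / 2 ≤ (inner ℝ ρ α : ℝ) / (inner ℝ α α : ℝ) := by
  classical
  intro α hα
  obtain ⟨f, hf⟩ := hposfun
  have hαΔ : α ∈ Δ := hpos hα
  have hα0 : α ≠ 0 := fun h => hzero (h ▸ hαΔ)
  have hii : (0:ℝ) < (inner ℝ α α : ℝ) := by
    rw [real_inner_self_eq_norm_sq]
    have : ‖α‖ ≠ 0 := norm_ne_zero_iff.mpr hα0
    positivity
  set c : E → ℝ := fun β => 2 * ((inner ℝ α β : ℝ) / (inner ℝ α α : ℝ)) with hc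
  set s : E → E := fun β => β - c β • α with hs
  have hsd : ∀ β ∈ Δ, s β ∈ Δ := fun β hβ => hrefl α hαΔ β hβ
  have hinner_α : ∀ β, (inner ℝ α (s β) : ℝ) = - (inner ℝ α β : ℝ) := by
    intro β
    simp only [hs, hc, inner_sub_right, real_inner_smul_right]
    field_simp
    ring
  have hcs : ∀ β, c (s β) = - c β := by
    intro β
    simp only [hc]
    rw [hinner_α β]
    ring
  have hss : ∀ β, s (s β) = β := by
    intro β
    simp only [hs] at *
    rw [hcs β]
    simp [hs]
  have hinner_s : ∀ β, (inner ℝ (s β) α : ℝ) = - (inner ℝ β α : ℝ) := by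
    intro β
    rw [real_inner_comm, hinner_α β, real_inner_comm]
  have hms : ∀ β ∈ Δ, m (s β) = m β := fun β hβ => hWinv α hαΔ β hβ
  have hsα : s α = -α := by
    simp only [hs, hc]
    rw [div_self hii.ne']
    module
  -- the summand
  set Γ : E → ℝ := fun β => (m β : ℝ) * (inner ℝ β α : ℝ) with hΓ
  have hfix : ∀ β, s β = β ↔ (inner ℝ α β : ℝ) = 0 := by
    intro β
    constructor
    · intro h
      have := hinner_α β
      rw [h] at this
      linarith
    · intro h
      simp [hs, hc, h]
  -- sum decomposition
  have hErase := (Finset.add_sum_erase Δpos Γ hα).symm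
  set T := Δpos.erase α with hT
  have hsplitT := Finset.sum_filter_add_sum_filter_not T (fun β => s β ∈ Δpos) Γ
  -- A-part is zero
  have hAzero : ∑ β ∈ T.filter (fun β => s β ∈ Δpos), Γ β = 0 := by
    apply Finset.sum_involution (fun β _ => s β)
    · intro β hβ
      simp only [Finset.mem_filter, hT, Finset.mem_erase] at hβ
      have hβΔ : β ∈ Δ := hpos hβ.1.2
      simp only [hΓ]
      rw [hms β hβΔ, hinner_s β]
      ring
    · intro β hβ h
      simp only [Finset.mem_filter, hT, Finset.mem_erase] at hβ
      intro heq
      rw [hfix] at heq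
      simp only [hΓ] at h
      rw [real_inner_comm] at heq
      simp [heq] at h
    · intro β hβ
      simp only [Finset.mem_filter, hT, Finset.mem_erase] at hβ ⊢
      refine ⟨⟨?_, hβ.2⟩, ?_⟩
      · intro heq
        have : β = s α := by rw [← heq, hss]
        rw [hsα] at this
        exact hdisj α hα (this ▸ hβ.1.2)
      · rw [hss]; exact hβ.1.2
    · intro β hβ; exact hss β
  -- B-part is nonneg
  have hBpos : 0 ≤ ∑ β ∈ T.filter (fun β => ¬ s β ∈ Δpos), Γ β := by
    apply Finset.sum_nonneg
    intro β hβ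
    simp only [Finset.mem_filter, hT, Finset.mem_erase] at hβ
    obtain ⟨⟨hβα, hβpos⟩, hsβ⟩ := hβ
    have hβΔ : β ∈ Δ := hpos hβpos
    have hsβΔ : s β ∈ Δ := hsd β hβΔ
    have hneg : -(s β) ∈ Δpos := (hsplit _ hsβΔ).resolve_left hsβ
    have hf1 : 0 < f (-(s β)) := hf _ hneg
    have hf2 : f (s β) = f β - c β * f α := by simp [hs]
    have hfβ : 0 < f β := hf β hβpos
    have hfα : 0 < f α := hf α hα
    have hc0 : 0 < c β := by
      have : f (s β) < 0 := by
        have := hf1; rw [map_neg] at this; linarith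
      nlinarith
    have hib : 0 ≤ (inner ℝ β α : ℝ) := by
      have : 0 < (inner ℝ α β : ℝ) / (inner ℝ α α : ℝ) := by
        simp only [hc] at hc0; linarith
      rw [real_inner_comm]
      have := (div_pos_iff.mp this)
      rcases this with ⟨h1, _⟩ | ⟨_, h2⟩
      · exact h1.le
      · linarith
    simp only [hΓ]
    positivity
  -- conclude
  have hsum : (inner ℝ ρ α : ℝ) = (1/2) * ∑ β ∈ Δpos, Γ β := by
    rw [hρ]
    rw [real_inner_smul_left, sum_inner]
    congr 1
    apply Finset.sum_congr rfl
    intro β _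
    rw [real_inner_smul_left]
  have hΓα : Γ α = (m α : ℝ) * (inner ℝ α α : ℝ) := rfl
  rw [div_le_div_iff₀ two_pos hii, hsum]
  have : Γ α ≤ ∑ β ∈ Δpos, Γ β := by
    rw [hErase, ← hsplitT, hAzero]
    linarith
  rw [hΓα] at this
  linarith
end

section
/- Let Δ be a reduced root system with even multiplicities, and define 1/c(m,λ) = C · Π_{α∈Δ⁺} Π_{k=0}^{m_α/2−1} (λ_α + k), where λ_α = ⟨λ,α⟩/⟨α,α⟩ and C = Π_{α∈Δ⁺} Π_{k=0}^{m_α/2−1} 1/(ρ_α + k). Then the function d(m,λ) := c(m,−ρ) / ( c(m,λ+ρ) c(m,−(λ+ρ)) ) is the polynomial function d(m,λ) = Π_{α∈Δ⁺} Π_{k=0}^{m_α/2−1} (k² − (λ+ρ)_α²)/(k² − ρ_α²). -/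
private lemma plancherel_aux {ι : Type*} (s : Finset ι) (n : ι → ℕ)
    (Cc : ℂ) (R T : ι → ℂ)
    (hC : Cc = ∏ i ∈ s, ∏ k ∈ Finset.range (n i), (R i + k)⁻¹)
    (hCne : Cc ≠ 0) :
    (Cc * ∏ i ∈ s, ∏ k ∈ Finset.range (n i), (-R i + k))⁻¹ /
      ((Cc * ∏ i ∈ s, ∏ k ∈ Finset.range (n i), (T i + k))⁻¹ *
       (Cc * ∏ i ∈ s, ∏ k ∈ Finset.range (n i), (-(T i) + k))⁻¹)
    = ∏ i ∈ s, ∏ k ∈ Finset.range (n i),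
        ((k:ℂ)^2 - (T i)^2) / ((k:ℂ)^2 - (R i)^2) := by
  set P0 := ∏ i ∈ s, ∏ k ∈ Finset.range (n i), (-R i + k) with hP0
  set P1 := ∏ i ∈ s, ∏ k ∈ Finset.range (n i), (T i + k) with hP1
  set P2 := ∏ i ∈ s, ∏ k ∈ Finset.range (n i), (-(T i) + k) with hP2
  have key : (Cc * P0)⁻¹ / ((Cc * P1)⁻¹ * (Cc * P2)⁻¹)
      = Cc * P0⁻¹ * (P1 * P2) := by
    have h1 : ((Cc * P1)⁻¹ * (Cc * P2)⁻¹)⁻¹ = (Cc * P1) * (Cc * P2) := by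
      rw [mul_inv, inv_inv, inv_inv]
    rw [div_eq_mul_inv, h1, mul_inv]
    calc Cc⁻¹ * P0⁻¹ * (Cc * P1 * (Cc * P2))
        = (Cc⁻¹ * Cc) * (Cc * P0⁻¹ * (P1 * P2)) := by ring
      _ = Cc * P0⁻¹ * (P1 * P2) := by rw [inv_mul_cancel₀ hCne, one_mul]
  rw [key, hC, hP0, hP1, hP2]
  simp only [← Finset.prod_inv_distrib, ← Finset.prod_mul_distrib]
  refine Finset.prod_congr rfl fun i _ => ?_
  refine Finset.prod_congr rfl fun k _ => ?_
  rw [div_eq_mul_inv,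
    show ((k:ℂ)^2 - (T i)^2) = (T i + k) * (-(T i) + k) by ring,
    show ((k:ℂ)^2 - (R i)^2) = (R i + k) * (-R i + k) by ring,
    mul_inv]
  ring


/-- For a reduced root system with even multiplicities, with
`1/c(m,λ) = C Π_{α∈Δ⁺} Π_{k=0}^{m_α/2−1} (λ_α + k)` and
`C = Π_{α∈Δ⁺} Π_{k=0}^{m_α/2−1} (ρ_α + k)⁻¹`, the function
`d(m,λ) = c(m,−ρ)/(c(m,λ+ρ) c(m,−(λ+ρ)))` is the polynomial
`Π_{α∈Δ⁺} Π_{k=0}^{m_α/2−1} (k² − (λ+ρ)_α²)/(k² − ρ_α²)`.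
The complexified dual space is parametrized by ℝ-linear maps `L : E →ₗ[ℝ] ℂ`,
with `λ_α = L α / ⟨α,α⟩`. -/
theorem plancherel_density_formula
    {E : Type*} [NormedAddCommGroup E] [InnerProductSpace ℝ E]
    (Δ Δpos : Finset E) (m : E → ℕ)
    (hzero : (0:E) ∉ Δ)
    (hrefl : ∀ α ∈ Δ, ∀ β ∈ Δ,
      β - (2 * ((inner ℝ α β : ℝ) / (inner ℝ α α : ℝ))) • α ∈ Δ)
    (hreduced : ∀ α ∈ Δ, (2:ℝ) • α ∉ Δ)
    (hpos : Δpos ⊆ Δ)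
    (hsplit : ∀ α ∈ Δ, α ∈ Δpos ∨ -α ∈ Δpos)
    (hdisj : ∀ α ∈ Δpos, -α ∉ Δpos)
    (heven : ∀ α, Even (m α))
    (ρ : E) (hρ : ρ = (1/2 : ℝ) • ∑ α ∈ Δpos, (m α : ℝ) • α)
    (hρineq : ∀ α ∈ Δpos, (m α : ℝ) / 2 ≤ (inner ℝ ρ α : ℝ) / (inner ℝ α α : ℝ))
    (C : ℝ)
    (hC : C = ∏ α ∈ Δpos, ∏ k ∈ Finset.range (m α / 2),
      ((inner ℝ ρ α : ℝ) / (inner ℝ α α : ℝ) + k)⁻¹)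
    (L : E →ₗ[ℝ] ℂ) :
    (let ρα : E → ℂ := fun α => (((inner ℝ ρ α : ℝ) / (inner ℝ α α : ℝ) : ℝ) : ℂ)
     let lα : E → ℂ := fun α => L α / ((inner ℝ α α : ℝ) : ℂ)
     let c : (E → ℂ) → ℂ := fun t =>
       ((C : ℂ) * ∏ α ∈ Δpos, ∏ k ∈ Finset.range (m α / 2), (t α + k))⁻¹
     c (fun α => -ρα α) /
        (c (fun α => lα α + ρα α) * c (fun α => -(lα α + ρα α)))
       = ∏ α ∈ Δpos, ∏ k ∈ Finset.range (m α / 2),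
           ((k : ℂ)^2 - (lα α + ρα α)^2) / ((k : ℂ)^2 - (ρα α)^2)) := by
  have hpos' : ∀ α ∈ Δpos, ∀ k ∈ Finset.range (m α / 2),
      (0:ℝ) < (inner ℝ ρ α : ℝ) / (inner ℝ α α : ℝ) + k := by
    intro α hα k hk
    have h1 := hρineq α hα
    have hk' : (k:ℝ) + 1 ≤ ((m α / 2 : ℕ) : ℝ) := by
      exact_mod_cast Nat.succ_le_of_lt (Finset.mem_range.mp hk)
    have h2 : ((m α / 2 : ℕ) : ℝ) ≤ (m α : ℝ) / 2 := by
      obtain ⟨n, hn⟩ := heven α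
      have h3 : m α / 2 = n := by omega
      rw [h3, hn]; push_cast; linarith
    linarith
  have hCne : C ≠ 0 := by
    rw [hC]
    refine Finset.prod_ne_zero_iff.mpr fun α hα => ?_
    refine Finset.prod_ne_zero_iff.mpr fun k hk => ?_
    exact inv_ne_zero (ne_of_gt (hpos' α hα k hk))
  have hCC : (C:ℂ) ≠ 0 := by exact_mod_cast hCne
  have hCast : (C:ℂ) = ∏ α ∈ Δpos, ∏ k ∈ Finset.range (m α / 2),
      ((((inner ℝ ρ α : ℝ) / (inner ℝ α α : ℝ) : ℝ) : ℂ) + k)⁻¹ := by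
    rw [hC]; push_cast; rfl
  exact plancherel_aux Δpos (fun α => m α / 2) (C:ℂ)
    (fun α => (((inner ℝ ρ α : ℝ) / (inner ℝ α α : ℝ) : ℝ) : ℂ))
    (fun α => L α / ((inner ℝ α α : ℝ) : ℂ) + (((inner ℝ ρ α : ℝ) / (inner ℝ α α : ℝ) : ℝ) : ℂ))
    hCast hCC
end

section
/- The polynomial d(m,λ) = Π_{α∈Δ⁺} Π_{k=0}^{m_α/2−1} (k²−(λ+ρ)_α²)/(k²−ρ_α²) is invariant under the Weyl group action λ ↦ w(λ+ρ) − ρ for every w ∈ W, i.e., d(m, w(λ+ρ)−ρ) = d(m,λ). -/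
/-- The polynomial
`d(m,λ) = Π_{α∈Δ⁺} Π_{k=0}^{m_α/2−1} (k²−(λ+ρ)_α²)/(k²−ρ_α²)` is invariant
under the affine Weyl-group action `λ ↦ w(λ+ρ) − ρ`: for every Weyl group
element `w` (an isometry permuting the roots and preserving `m`),
`d(m, w(λ+ρ)−ρ) = d(m,λ)`. -/
theorem plancherel_density_weyl_invariant
    {E : Type*} [NormedAddCommGroup E] [InnerProductSpace ℝ E]
    (Δ Δpos : Finset E) (m : E → ℕ)
    (hzero : (0:E) ∉ Δ)
    (hrefl : ∀ α ∈ Δ, ∀ β ∈ Δ,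
      β - (2 * ((inner ℝ α β : ℝ) / (inner ℝ α α : ℝ))) • α ∈ Δ)
    (hreduced : ∀ α ∈ Δ, (2:ℝ) • α ∉ Δ)
    (hpos : Δpos ⊆ Δ)
    (hsplit : ∀ α ∈ Δ, α ∈ Δpos ∨ -α ∈ Δpos)
    (hdisj : ∀ α ∈ Δpos, -α ∉ Δpos)
    (heven : ∀ α, Even (m α))
    (hmneg : ∀ α, m (-α) = m α)
    (ρ : E) (hρ : ρ = (1/2 : ℝ) • ∑ α ∈ Δpos, (m α : ℝ) • α)
    (hρineq : ∀ α ∈ Δpos, (m α : ℝ) / 2 ≤ (inner ℝ ρ α : ℝ) / (inner ℝ α α : ℝ))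
    (w : E ≃ₗᵢ[ℝ] E) (hw : ∀ α ∈ Δ, w α ∈ Δ) (hwm : ∀ α ∈ Δ, m (w α) = m α)
    (lam : E) :
    (let d : E → ℝ := fun ν => ∏ α ∈ Δpos, ∏ k ∈ Finset.range (m α / 2),
        ((k : ℝ)^2 - ((inner ℝ (ν + ρ) α : ℝ) / (inner ℝ α α : ℝ))^2) /
          ((k : ℝ)^2 - ((inner ℝ ρ α : ℝ) / (inner ℝ α α : ℝ))^2)
     d (w (lam + ρ) - ρ) = d lam) := by
  intro d
  classical
  -- w.symm maps Δ into Δ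
  have hwsymm : ∀ α ∈ Δ, w.symm α ∈ Δ := by
    have himg : Δ.image (fun x => w x) = Δ := by
      apply Finset.eq_of_subset_of_card_le
      · intro x hx
        simp only [Finset.mem_image] at hx
        obtain ⟨a, ha, rfl⟩ := hx
        exact hw a ha
      · rw [Finset.card_image_of_injective _ w.injective]
    intro α hα
    rw [← himg] at hα
    simp only [Finset.mem_image] at hα
    obtain ⟨a, ha, hwa⟩ := hα
    have : w.symm α = a := by rw [← hwa]; simp
    rwa [this]
  have hwm' : ∀ α ∈ Δ, m (w.symm α) = m α := by
    intro α hα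
    have := hwm (w.symm α) (hwsymm α hα)
    simpa using this.symm
  set σ : E → E := fun α => if w.symm α ∈ Δpos then w.symm α else -(w.symm α) with hσ
  set τ : E → E := fun α => if w α ∈ Δpos then w α else -(w α) with hτ
  have hσmem : ∀ α ∈ Δpos, σ α ∈ Δpos := by
    intro α hα
    by_cases h : w.symm α ∈ Δpos
    · simp [hσ, h]
    · have := hsplit (w.symm α) (hwsymm α (hpos hα))
      simp only [hσ, h, if_false]
      tauto
  have hτmem : ∀ α ∈ Δpos, τ α ∈ Δpos := by
    intro α hα
    by_cases h : w α ∈ Δpos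
    · simp [hτ, h]
    · have := hsplit (w α) (hw α (hpos hα))
      simp only [hτ, h, if_false]
      tauto
  have hτσ : ∀ α ∈ Δpos, τ (σ α) = α := by
    intro α hα
    by_cases h : w.symm α ∈ Δpos
    · simp [hσ, hτ, h, hα]
    · have hneg : w (-(w.symm α)) = -α := by simp
      simp only [hσ, h, if_false, hτ, hneg]
      have hne : -α ∉ Δpos := hdisj α hα
      simp [hne]
  have hστ : ∀ α ∈ Δpos, σ (τ α) = α := by
    intro α hα
    by_cases h : w α ∈ Δpos
    · simp [hσ, hτ, h, hα]
    · have hneg : w.symm (-(w α)) = -α := by simp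
      simp only [hτ, h, if_false, hσ, hneg]
      have hne : -α ∉ Δpos := hdisj α hα
      simp [hne]
  -- unfold d and simplify the shift
  show (∏ α ∈ Δpos, ∏ k ∈ Finset.range (m α / 2),
      ((k : ℝ)^2 - ((inner ℝ (w (lam + ρ) - ρ + ρ) α : ℝ) / (inner ℝ α α : ℝ))^2) /
        ((k : ℝ)^2 - ((inner ℝ ρ α : ℝ) / (inner ℝ α α : ℝ))^2))
    = ∏ α ∈ Δpos, ∏ k ∈ Finset.range (m α / 2),
      ((k : ℝ)^2 - ((inner ℝ (lam + ρ) α : ℝ) / (inner ℝ α α : ℝ))^2) /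
        ((k : ℝ)^2 - ((inner ℝ ρ α : ℝ) / (inner ℝ α α : ℝ))^2)
  have hshift : w (lam + ρ) - ρ + ρ = w (lam + ρ) := sub_add_cancel _ _
  rw [hshift]
  -- split numerators and denominators
  have hsplitprod : ∀ (f : E → ℝ),
      (∏ α ∈ Δpos, ∏ k ∈ Finset.range (m α / 2),
        ((k : ℝ)^2 - (f α)^2) / ((k : ℝ)^2 - ((inner ℝ ρ α : ℝ) / (inner ℝ α α : ℝ))^2))
      = (∏ α ∈ Δpos, ∏ k ∈ Finset.range (m α / 2), ((k : ℝ)^2 - (f α)^2)) /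
        (∏ α ∈ Δpos, ∏ k ∈ Finset.range (m α / 2),
          ((k : ℝ)^2 - ((inner ℝ ρ α : ℝ) / (inner ℝ α α : ℝ))^2)) := by
    intro f
    rw [← Finset.prod_div_distrib]
    exact Finset.prod_congr rfl fun α _ => Finset.prod_div_distrib _ _
  rw [hsplitprod (fun α => (inner ℝ (w (lam + ρ)) α : ℝ) / (inner ℝ α α : ℝ)),
      hsplitprod (fun α => (inner ℝ (lam + ρ) α : ℝ) / (inner ℝ α α : ℝ))]
  congr 1
  -- numerators equal via reindexing by σ
  refine Finset.prod_nbij' σ τ hσmem hτmem hτσ hστ ?_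
  intro α hα
  have hm : m (σ α) = m α := by
    by_cases h : w.symm α ∈ Δpos
    · simp only [hσ, h, if_true]
      exact hwm' α (hpos hα)
    · simp only [hσ, h, if_false]
      rw [hmneg]
      exact hwm' α (hpos hα)
  have hinner1 : (inner ℝ (w (lam + ρ)) α : ℝ) = (inner ℝ (lam + ρ) (w.symm α) : ℝ) := by
    conv_lhs => rw [show α = w (w.symm α) by simp]
    exact w.inner_map_map _ _
  have hinner2 : (inner ℝ α α : ℝ) = (inner ℝ (w.symm α) (w.symm α) : ℝ) := by
    conv_lhs => rw [show α = w (w.symm α) by simp]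
    exact w.inner_map_map _ _
  have key : ((inner ℝ (lam + ρ) (σ α) : ℝ) / (inner ℝ (σ α) (σ α) : ℝ))^2
      = ((inner ℝ (w (lam + ρ)) α : ℝ) / (inner ℝ α α : ℝ))^2 := by
    rw [hinner1, hinner2]
    by_cases h : w.symm α ∈ Δpos
    · simp [hσ, h]
    · simp only [hσ, h, if_false, inner_neg_right, inner_neg_neg, inner_neg_left, neg_neg]
      rw [neg_div, neg_sq]
  rw [hm]
  exact Finset.prod_congr rfl fun k _ => by rw [key]
end
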